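/- In the setting of the lattice form of Grothendieck's theorem, the multiset of integers n_1 ≤ … ≤ n_d such that some O_∞-basis v_1,…,v_d of Λ_∞ gives an A-basis π^{n_1}v_1,…,π^{n_d}v_d of Λ is uniquely determined by the pair (Λ, Λ_∞). -/

import Mathlib

/-- The embedding of `A = k[T]` into `K∞ = k((π))`, sending `T` to `π⁻¹` where `π = 1/T`
is the uniformizer `HahnSeries.single 1 1`. -/
noncomputable def polyToLS (k : Type*) [Field k] : Polynomial k →ₐ[k] LaurentSeries k :=
  Polynomial.aeval (HahnSeries.single (1 : ℤ) (1 : k))⁻¹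

/-- The `A`-lattice spanned by the vectors `b i`: all `A = k[T]`-linear combinations. -/
def latticeA (k : Type*) [Field k] {V : Type*} [AddCommGroup V]
    [Module (LaurentSeries k) V] {d : ℕ} (b : Fin d → V) : Set V :=
  {x | ∃ a : Fin d → Polynomial k, x = ∑ i, polyToLS k (a i) • b i}

/-- The `O∞`-lattice spanned by the vectors `b i`: all `O∞ = k[[π]]`-linear combinations. -/
def latticeO (k : Type*) [Field k] {V : Type*} [AddCommGroup V]
    [Module (LaurentSeries k) V] {d : ℕ} (b : Fin d → V) : Set V :=
  {x | ∃ c : Fin d → PowerSeries k, x = ∑ i, ((c i : LaurentSeries k)) • b i}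

namespace GrothAux

open HahnSeries Finset Submodule

variable {k : Type*} [Field k]

lemma pi_ne : (HahnSeries.single (1:ℤ) (1:k) : LaurentSeries k) ≠ 0 :=
  single_ne_zero one_ne_zero

lemma pi_zpow (t : ℤ) :
    (HahnSeries.single (1:ℤ) (1:k) : LaurentSeries k) ^ t = HahnSeries.single t 1 :=
  (RatFunc.single_zpow t).symm

lemma pi_zpow_ne (t : ℤ) : (HahnSeries.single (1:ℤ) (1:k) : LaurentSeries k) ^ t ≠ 0 := by
  rw [pi_zpow]; exact single_ne_zero one_ne_zero

lemma order_pi_zpow (t : ℤ) :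
    ((HahnSeries.single (1:ℤ) (1:k) : LaurentSeries k) ^ t).order = t := by
  rw [pi_zpow]; exact order_single one_ne_zero

lemma pi_inv : (HahnSeries.single (1:ℤ) (1:k) : LaurentSeries k)⁻¹
    = HahnSeries.single (-1 : ℤ) (1:k) := by
  simpa using (RatFunc.single_inv (1:ℤ) (one_ne_zero (α := k))).symm

lemma coeff_polyToLS (p : Polynomial k) (j : ℕ) :
    (polyToLS k p).coeff (-(j:ℤ)) = p.coeff j := by
  induction p using Polynomial.induction_on' with
  | add f g hf hg => rw [map_add, HahnSeries.coeff_add, hf, hg, Polynomial.coeff_add]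
  | monomial i a =>
    have ha : (algebraMap k (LaurentSeries k)) a = HahnSeries.single (0:ℤ) a := by
      rw [HahnSeries.algebraMap_apply', PowerSeries.algebraMap_apply, Algebra.algebraMap_self, RingHom.id_apply, ofPowerSeries_C, C_apply]
    rw [polyToLS, Polynomial.aeval_monomial, pi_inv, single_pow, one_pow, ha,
      single_mul_single, zero_add,
      mul_one, HahnSeries.coeff_single, Polynomial.coeff_monomial]
    have : (-(j:ℤ) = i • (-1:ℤ)) ↔ (i = j) := by
      rw [nsmul_eq_mul]; omega
    by_cases h : i = j
    · rw [if_pos (this.mpr h), if_pos h]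
    · rw [if_neg (fun hc => h (this.mp hc)), if_neg h]

lemma coeff_polyToLS_lead (p : Polynomial k) (hp : p ≠ 0) :
    (polyToLS k p).coeff (-(p.natDegree : ℤ)) ≠ 0 := by
  rw [coeff_polyToLS]
  exact Polynomial.leadingCoeff_ne_zero.mpr hp

lemma polyToLS_ne {p : Polynomial k} (hp : p ≠ 0) : polyToLS k p ≠ 0 :=
  ne_zero_of_coeff_ne_zero (coeff_polyToLS_lead p hp)

lemma order_polyToLS_le {p : Polynomial k} (hp : p ≠ 0) : (polyToLS k p).order ≤ 0 :=
  le_trans (order_le_of_coeff_ne_zero (coeff_polyToLS_lead p hp)) (by simp)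

lemma order_coe_nonneg {f : PowerSeries k} (hf : (f : LaurentSeries k) ≠ 0) :
    0 ≤ (f : LaurentSeries k).order := by
  by_contra h
  push_neg at h
  have hco := coeff_order_eq_zero.not.mpr hf
  rw [PowerSeries.coeff_coe, if_pos h] at hco
  exact hco rfl

variable {V : Type*} [AddCommGroup V] [Module (LaurentSeries k) V] {d : ℕ}

lemma span_eq (v : Fin d → V) (n : Fin d → ℤ)
    (hli : LinearIndependent (LaurentSeries k) v) (m : ℤ) :
    Submodule.span (LaurentSeries k)
      {x | x ∈ latticeA k (fun i =>
          ((HahnSeries.single (1 : ℤ) (1 : k) : LaurentSeries k) ^ (n i)) • v i)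
        ∧ ((HahnSeries.single (1 : ℤ) (1 : k) : LaurentSeries k) ^ m) • x ∈ latticeO k v} =
    Submodule.span (LaurentSeries k) (v '' {j | 0 ≤ m + n j}) := by
  classical
  set π : LaurentSeries k := HahnSeries.single (1 : ℤ) (1 : k) with hπ
  apply le_antisymm
  · rw [Submodule.span_le]
    rintro x ⟨⟨a, rfl⟩, c, hc⟩
    have hx2 : ∑ i, (π ^ m * (polyToLS k (a i) * π ^ (n i))) • v i
        = ∑ i, ((c i : LaurentSeries k)) • v i := by
      rw [← hc, Finset.smul_sum]
      refine Finset.sum_congr rfl fun i _ => ?_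
      rw [smul_smul, smul_smul, mul_assoc]
    have hco : ∀ i : Fin d,
        π ^ m * (polyToLS k (a i) * π ^ (n i)) = (c i : LaurentSeries k) := by
      have h0 : ∑ i : Fin d, ((π ^ m * (polyToLS k (a i) * π ^ (n i)))
          - (c i : LaurentSeries k)) • v i = 0 := by
        simp only [sub_smul, Finset.sum_sub_distrib, hx2, sub_self]
      intro i
      have := linearIndependent_iff'.mp hli Finset.univ _ h0 i (Finset.mem_univ i)
      exact sub_eq_zero.mp this
    refine Submodule.sum_mem _ fun i _ => ?_
    by_cases hai : a i = 0
    · simp [hai]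
    · have hne : (c i : LaurentSeries k) ≠ 0 := by
        rw [← hco i]
        exact mul_ne_zero (pi_zpow_ne m) (mul_ne_zero (polyToLS_ne hai) (pi_zpow_ne _))
      have hord := order_coe_nonneg hne
      rw [← hco i, order_mul (pi_zpow_ne m)
          (mul_ne_zero (polyToLS_ne hai) (pi_zpow_ne _)),
        order_mul (polyToLS_ne hai) (pi_zpow_ne _), order_pi_zpow, order_pi_zpow] at hord
      have hple := order_polyToLS_le hai
      have hJ : (0:ℤ) ≤ m + n i := by linarith
      rw [smul_smul]
      exact Submodule.smul_mem _ _ (Submodule.subset_span ⟨i, hJ, rfl⟩)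
  · rw [Submodule.span_le]
    rintro x ⟨i, hi, rfl⟩
    have hi' : (0:ℤ) ≤ m + n i := hi
    have hwA : (π ^ (n i)) • v i ∈ latticeA k (fun j => (π ^ (n j)) • v j) := by
      refine ⟨Pi.single i 1, ?_⟩
      rw [Finset.sum_eq_single i ?_ ?_]
      · rw [Pi.single_eq_same, map_one, one_smul]
      · intro j _ hj
        rw [Pi.single_eq_of_ne hj, map_zero, zero_smul]
      · intro h; exact absurd (Finset.mem_univ i) h
    have hwO : (π ^ m) • ((π ^ (n i)) • v i) ∈ latticeO k v := by
      refine ⟨Pi.single i (PowerSeries.X ^ (m + n i).toNat), ?_⟩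
      rw [Finset.sum_eq_single i ?_ ?_]
      · rw [Pi.single_eq_same, PowerSeries.coe_pow, PowerSeries.coe_X, smul_smul,
          ← zpow_natCast, Int.toNat_of_nonneg hi', ← hπ, ← zpow_add₀ pi_ne]
      · intro j _ hj
        rw [Pi.single_eq_of_ne hj, PowerSeries.coe_zero, zero_smul]
      · intro h; exact absurd (Finset.mem_univ i) h
    have hmem : (π ^ (n i)) • v i ∈ Submodule.span (LaurentSeries k)
        {x | x ∈ latticeA k (fun j => (π ^ (n j)) • v j) ∧ (π ^ m) • x ∈ latticeO k v} :=
      Submodule.subset_span ⟨hwA, hwO⟩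
    have := Submodule.smul_mem _ (π ^ (-(n i))) hmem
    rwa [smul_smul, ← zpow_add₀ pi_ne, neg_add_cancel, zpow_zero, one_smul] at this

lemma finrank_span (v : Fin d → V) (n : Fin d → ℤ)
    (hli : LinearIndependent (LaurentSeries k) v) (m : ℤ) :
    Module.finrank (LaurentSeries k)
      (Submodule.span (LaurentSeries k) (v '' {j | 0 ≤ m + n j}))
      = (Finset.univ.filter fun j => 0 ≤ m + n j).card := by
  classical
  have h1 : v '' {j | 0 ≤ m + n j}
      = Set.range (v ∘ (Subtype.val : {j // 0 ≤ m + n j} → Fin d)) := by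
    rw [Set.range_comp, Subtype.range_coe_subtype]
  rw [h1, finrank_span_eq_card (hli.comp Subtype.val Subtype.val_injective),
    Fintype.card_subtype]

lemma count_iff {n : Fin d → ℤ} (hmono : Monotone n) (i : Fin d) (m : ℤ) :
    0 ≤ m + n i ↔ d - i.val ≤ (Finset.univ.filter fun j => 0 ≤ m + n j).card := by
  classical
  constructor
  · intro h
    have hsub : Finset.Ici i ⊆ Finset.univ.filter fun j => 0 ≤ m + n j := by
      intro j hj
      refine Finset.mem_filter.mpr ⟨Finset.mem_univ _, ?_⟩
      have := hmono (Finset.mem_Ici.mp hj)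
      linarith
    calc d - i.val = (Finset.Ici i).card := (Fin.card_Ici i).symm
      _ ≤ _ := Finset.card_le_card hsub
  · intro h
    by_contra hlt
    push_neg at hlt
    have hsub : (Finset.univ.filter fun j => 0 ≤ m + n j) ⊆ Finset.Ioi i := by
      intro j hj
      rcases Finset.mem_filter.mp hj with ⟨-, hj⟩
      rw [Finset.mem_Ioi]
      by_contra hji
      push_neg at hji
      have := hmono hji
      linarith
    have hc := le_trans h (Finset.card_le_card hsub)
    rw [Fin.card_Ioi] at hc
    have := i.isLt
    omega

end GrothAux

/-- **Uniqueness of the splitting type.** The nondecreasing sequence of integers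
`n₁ ≤ … ≤ n_d` appearing in the lattice form of Grothendieck's theorem is uniquely
determined by the pair of lattices `(Λ, Λ∞)`. -/
theorem stmt19 {k V : Type*} [Field k] [AddCommGroup V] [Module (LaurentSeries k) V]
    {d : ℕ} (bL bO : Module.Basis (Fin d) (LaurentSeries k) V)
    (v v' : Fin d → V) (n n' : Fin d → ℤ)
    (hmono : Monotone n) (hmono' : Monotone n')
    (hli : LinearIndependent (LaurentSeries k) v)
    (hli' : LinearIndependent (LaurentSeries k) v')
    (hO : latticeO k v = latticeO k bO) (hO' : latticeO k v' = latticeO k bO)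
    (hA : latticeA k (fun i =>
        ((HahnSeries.single (1 : ℤ) (1 : k) : LaurentSeries k) ^ (n i)) • v i) = latticeA k bL)
    (hA' : latticeA k (fun i =>
        ((HahnSeries.single (1 : ℤ) (1 : k) : LaurentSeries k) ^ (n' i)) • v' i) = latticeA k bL) :
    n = n' := by
  classical
  have key : ∀ m : ℤ, (Finset.univ.filter fun j => 0 ≤ m + n j).card
      = (Finset.univ.filter fun j => 0 ≤ m + n' j).card := by
    intro m
    have h1 := GrothAux.span_eq v n hli m
    have h2 := GrothAux.span_eq v' n' hli' m
    rw [hA, hO] at h1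
    rw [hA', hO'] at h2
    have hs := h1.symm.trans h2
    have hf := congrArg (fun S : Submodule (LaurentSeries k) V =>
      Module.finrank (LaurentSeries k) S) hs
    rw [GrothAux.finrank_span v n hli m, GrothAux.finrank_span v' n' hli' m] at hf
    exact hf
  funext i
  have h1 : (0:ℤ) ≤ -(n i) + n' i := by
    rw [GrothAux.count_iff hmono' i (-(n i)), ← key]
    rw [← GrothAux.count_iff hmono i (-(n i))]
    linarith
  have h2 : (0:ℤ) ≤ -(n' i) + n i := by
    rw [GrothAux.count_iff hmono i (-(n' i)), key]
    rw [← GrothAux.count_iff hmono' i (-(n' i))]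
    linarith
  omega
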